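/- For every real r ≥ 1 and every integer n ≥ 1, (r/(r+1))·n^r(n+1)^r/((n+1)^r − n^r) ≥ n^r(n + 1/2)(n+1)^r/((n+1)^{r+1} − n^{r+1}); equivalently ((n+1)^{r+1} − n^{r+1})/((n+1)^r − n^r) ≥ ((r+1)/r)(n + 1/2). -/

import Mathlib

open Real Set

lemma amgm_aux (r a x : ℝ) (hr : 1 ≤ r) (ha : 0 < a) (hx : 0 < x) :
    r * (a * x ^ (r - 1)) ≤ a ^ r + (r - 1) * x ^ r := by
  have hr0 : (0:ℝ) < r := lt_of_lt_of_le one_pos hr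
  have key := Real.geom_mean_le_arith_mean2_weighted
    (w₁ := 1/r) (w₂ := (r-1)/r) (p₁ := a ^ r) (p₂ := x ^ r)
    (by positivity) (div_nonneg (by linarith) hr0.le) (by positivity) (by positivity)
    (by field_simp; ring)
  have h1 : (a ^ r) ^ (1/r) = a := by
    rw [← Real.rpow_mul ha.le, mul_one_div, div_self hr0.ne', Real.rpow_one]
  have h2 : (x ^ r) ^ ((r-1)/r) = x ^ (r-1) := by
    rw [← Real.rpow_mul hx.le, mul_div_cancel₀ _ hr0.ne']
  rw [h1, h2] at key
  have := mul_le_mul_of_nonneg_left key hr0.le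
  calc r * (a * x ^ (r-1)) = r * (a * x ^ (r-1)) := rfl
    _ ≤ r * (1/r * a ^ r + (r-1)/r * x ^ r) := by
        exact mul_le_mul_of_nonneg_left key hr0.le
    _ = a ^ r + (r-1) * x ^ r := by field_simp


lemma key_ineq (r a b : ℝ) (hr : 1 ≤ r) (ha : 0 < a) (hab : a ≤ b) :
    (r + 1) * ((a + b) * (b ^ r - a ^ r)) ≤ 2 * r * (b ^ (r+1) - a ^ (r+1)) := by
  have hr0 : (0:ℝ) < r := lt_of_lt_of_le one_pos hr
  set f : ℝ → ℝ := fun x => 2*r*(x^(r+1) - a^(r+1)) - (r+1)*((a+x)*(x^r - a^r)) with hf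
  have hd : ∀ x ∈ Ici a, HasDerivAt f
      (2*r*((r+1)*x^r) - (r+1)*(((x^r - a^r) + (a+x)*(r*x^(r-1))))) x := by
    intro x hx
    have hx0 : (0:ℝ) < x := lt_of_lt_of_le ha hx
    have h1 : HasDerivAt (fun y : ℝ => y ^ (r+1)) ((r+1)*x^r) x := by
      have := Real.hasDerivAt_rpow_const (x := x) (p := r+1) (Or.inl hx0.ne')
      simpa using this
    have h2 : HasDerivAt (fun y : ℝ => y ^ r) (r*x^(r-1)) x :=
      Real.hasDerivAt_rpow_const (x := x) (p := r) (Or.inl hx0.ne')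
    have hA : HasDerivAt (fun y : ℝ => 2*r*(y^(r+1) - a^(r+1))) (2*r*((r+1)*x^r)) x :=
      ((h1.sub_const _).const_mul _)
    have hB : HasDerivAt (fun y : ℝ => (a+y)*(y^r - a^r))
        (1*(x^r - a^r) + (a+x)*(r*x^(r-1))) x := by
      exact ((hasDerivAt_id x).const_add a).mul (h2.sub_const _)
    have := hA.sub (hB.const_mul (r+1))
    exact this.congr_deriv (by ring)
  have hderiv_nonneg : ∀ x ∈ Ici a,
      0 ≤ 2*r*((r+1)*x^r) - (r+1)*(((x^r - a^r) + (a+x)*(r*x^(r-1)))) := by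
    intro x hx
    have hx0 : (0:ℝ) < x := lt_of_lt_of_le ha hx
    have hag := amgm_aux r a x hr ha hx0
    have hQ : x ^ (r-1) * x = x ^ r := by
      rw [← Real.rpow_add_one hx0.ne']; ring_nf
    have hAP : a ^ r ≤ x ^ r := Real.rpow_le_rpow ha.le hx hr0.le
    have h1 := mul_le_mul_of_nonneg_left hag (by linarith : (0:ℝ) ≤ r+1)
    have hq1 : r^2 * (x * x^(r-1)) = r^2 * x^r := by rw [mul_comm x, hQ]
    have hq2 : r * (x * x^(r-1)) = r * x^r := by rw [mul_comm x, hQ]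
    nlinarith [h1, hq1, hq2]
  have hmono : MonotoneOn f (Ici a) := by
    apply monotoneOn_of_deriv_nonneg (convex_Ici a)
    · exact fun x hx => ((hd x hx).continuousAt).continuousWithinAt
    · intro x hx
      rw [interior_Ici] at hx
      exact ((hd x (Ioi_subset_Ici_self hx)).differentiableAt).differentiableWithinAt
    · intro x hx
      rw [interior_Ici] at hx
      rw [(hd x (Ioi_subset_Ici_self hx)).deriv]
      exact hderiv_nonneg x (Ioi_subset_Ici_self hx)
  have h0 : f a = 0 := by simp [hf]
  have := hmono (self_mem_Ici) hab hab
  rw [h0] at this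
  simp only [hf] at this
  linarith


theorem levin_steckin_stronger (r : ℝ) (hr : 1 ≤ r) (n : ℕ) (hn : 1 ≤ n) :
    ((r / (r + 1)) * ((n : ℝ) ^ r * ((n : ℝ) + 1) ^ r / (((n : ℝ) + 1) ^ r - (n : ℝ) ^ r)) ≥
      (n : ℝ) ^ r * ((n : ℝ) + 1 / 2) * ((n : ℝ) + 1) ^ r /
        (((n : ℝ) + 1) ^ (r + 1) - (n : ℝ) ^ (r + 1))) ∧
    ((((n : ℝ) + 1) ^ (r + 1) - (n : ℝ) ^ (r + 1)) / (((n : ℝ) + 1) ^ r - (n : ℝ) ^ r) ≥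
      ((r + 1) / r) * ((n : ℝ) + 1 / 2)) := by
  have hr0 : (0:ℝ) < r := lt_of_lt_of_le one_pos hr
  set a : ℝ := (n : ℝ) with ha_def
  have ha : (0:ℝ) < a := by
    have : (1:ℝ) ≤ (n:ℝ) := by exact_mod_cast hn
    linarith
  have hab : a < a + 1 := by linarith
  have hD : (0:ℝ) < (a+1)^r - a^r :=
    sub_pos.mpr (Real.rpow_lt_rpow ha.le hab hr0)
  have hD1 : (0:ℝ) < (a+1)^(r+1) - a^(r+1) :=
    sub_pos.mpr (Real.rpow_lt_rpow ha.le hab (by linarith))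
  have key := key_ineq r a (a+1) hr ha (le_of_lt hab)
  -- core: (r+1)*(a+1/2)*D ≤ r*D1
  have hcore : (r+1)*(a+1/2)*((a+1)^r - a^r) ≤ r*((a+1)^(r+1) - a^(r+1)) := by
    nlinarith [key]
  constructor
  · rw [ge_iff_le, div_mul_div_comm, div_le_div_iff₀ hD1 (by positivity)]
    have hM : (0:ℝ) < a^r * (a+1)^r := by positivity
    nlinarith [mul_le_mul_of_nonneg_left hcore hM.le]
  · rw [ge_iff_le, le_div_iff₀ hD, div_mul_eq_mul_div, div_mul_eq_mul_div, div_le_iff₀ hr0]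
    nlinarith [hcore]
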